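/- Let C be a cyclic code of length n and dimension k over F_q with exactly s distinct nonzero weights. Then, as real numbers, s ≤ 1 + (q^k − 1) · ( Σ_{t | n, t > 1} 1 / lcm(t, q−1)^2 )^{1/2}. -/

import Mathlib

/-- The cyclic shift `ρ` on words of length `n`: `(ρ c) i = c (i - 1)`. -/
def cshift {F : Type*} {n : ℕ} (c : ZMod n → F) : ZMod n → F := fun i => c (i - 1)

/-- Hamming weight: the number of nonzero coordinates. -/
noncomputable def hwt {ι F : Type*} [Zero F] (c : ι → F) : ℕ := Set.ncard {i | c i ≠ 0}

open MulAction

section Setup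

variable {F : Type*} [Field F] [Fintype F] {n : ℕ} [NeZero n]

/-- The acting group: cyclic shifts times nonzero scalars. -/
abbrev Gp (n : ℕ) (F : Type*) [Field F] : Type _ := Multiplicative (ZMod n) × Fˣ

instance : SMul (Gp n F) (ZMod n → F) :=
  ⟨fun g c i => (g.2 : F) * c (i - g.1.toAdd)⟩

lemma gp_smul_apply (g : Gp n F) (c : ZMod n → F) (i : ZMod n) :
    (g • c) i = (g.2 : F) * c (i - g.1.toAdd) := rfl

instance : MulAction (Gp n F) (ZMod n → F) where
  one_smul c := funext fun i => by simp [gp_smul_apply]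
  mul_smul g h c := funext fun i => by
    simp only [gp_smul_apply, Prod.fst_mul, Prod.snd_mul, Units.val_mul, toAdd_mul]
    rw [mul_assoc, sub_sub]

end Setup

set_option linter.unusedSectionVars false

section Per

variable {F : Type*} [Field F] [Fintype F] {n : ℕ} [NeZero n]

/-- The "period" of a word: the index of its stabilizer under pure shifts. -/
noncomputable def per (c : ZMod n → F) : ℕ :=
  ((stabilizer (Gp n F) c).comap (MonoidHom.inl (Multiplicative (ZMod n)) Fˣ)).index

lemma card_M : Nat.card (Multiplicative (ZMod n)) = n := by
  simp [Nat.card_eq_fintype_card, ZMod.card]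

lemma per_dvd (c : ZMod n → F) : per c ∣ n := by
  have h := Subgroup.index_dvd_card
    (H := (stabilizer (Gp n F) c).comap (MonoidHom.inl (Multiplicative (ZMod n)) Fˣ))
  rwa [card_M] at h

lemma per_pos (c : ZMod n → F) : 0 < per c := by
  have := per_dvd (n := n) c
  rcases Nat.eq_zero_or_pos (per c) with h | h
  · exfalso; rw [h] at this; exact (NeZero.ne n) (Nat.eq_zero_of_zero_dvd this)
  · exact h

lemma per_smul (g : Gp n F) (c : ZMod n → F) : per (g • c) = per c := by
  unfold per
  congr 1
  ext m
  simp only [Subgroup.mem_comap, mem_stabilizer_iff]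
  constructor
  · intro h
    have : (MonoidHom.inl (Multiplicative (ZMod n)) Fˣ) m • g • c = g • c := h
    rw [smul_smul, mul_comm, ← smul_smul] at this
    exact smul_left_cancel g this
  · intro h
    show (MonoidHom.inl (Multiplicative (ZMod n)) Fˣ) m • g • c = g • c
    rw [smul_smul, mul_comm, ← smul_smul, h]

lemma per_eq_one_const {c : ZMod n → F} (h : per c = 1) : ∀ i, c i = c 0 := by
  rw [per, Subgroup.index_eq_one] at h
  intro i
  have hm : (MonoidHom.inl (Multiplicative (ZMod n)) Fˣ) (Multiplicative.ofAdd i) • c = c := by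
    have := h ▸ Subgroup.mem_top (Multiplicative.ofAdd i)
    exact (Subgroup.mem_comap.mp (h ▸ Subgroup.mem_top (Multiplicative.ofAdd i)) : _)
  have := congrFun hm i
  simpa [gp_smul_apply] using this.symm

end Per

section Act

variable {F : Type*} [Field F] [Fintype F] {n : ℕ} [NeZero n]

lemma smul_mem_code {C : Submodule F (ZMod n → F)} (hcyc : ∀ c ∈ C, cshift c ∈ C)
    {c : ZMod n → F} (hc : c ∈ C) (g : Gp n F) : g • c ∈ C := by
  have key : ∀ (j : ℕ), (fun i => c (i - (j : ZMod n))) ∈ C := by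
    intro j
    induction j with
    | zero => simpa using hc
    | succ j ih =>
      have := hcyc _ ih
      have heq : cshift (fun i => c (i - (j : ZMod n))) =
          fun i => c (i - ((j + 1 : ℕ) : ZMod n)) := by
        funext i
        simp only [cshift]
        congr 1
        push_cast
        ring
      rwa [heq] at this
  obtain ⟨j, hj⟩ := ZMod.natCast_zmod_surjective (g.1.toAdd)
  have h1 : (fun i => c (i - g.1.toAdd)) ∈ C := by rw [← hj]; exact key j
  have h2 : g • c = (g.2 : F) • (fun i => c (i - g.1.toAdd)) := by
    funext i; simp [gp_smul_apply]
  rw [h2]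
  exact C.smul_mem _ h1

lemma gp_smul_zero (g : Gp n F) : g • (0 : ZMod n → F) = 0 := by
  funext i; simp [gp_smul_apply]

lemma smul_ne_zero_code {c : ZMod n → F} (hc : c ≠ 0) (g : Gp n F) : g • c ≠ 0 := by
  intro h
  apply hc
  have := congrArg (fun d => g⁻¹ • d) h
  simpa [smul_smul, gp_smul_zero] using this

lemma hwt_smul (g : Gp n F) (c : ZMod n → F) : hwt (g • c) = hwt c := by
  unfold hwt
  have : {i | (g • c) i ≠ 0} = (fun i => i + g.1.toAdd) '' {i | c i ≠ 0} := by
    ext i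
    simp only [gp_smul_apply, Set.mem_setOf_eq, Set.mem_image, ne_eq, mul_eq_zero,
      Units.ne_zero, false_or]
    constructor
    · intro h; exact ⟨i - g.1.toAdd, h, by ring⟩
    · rintro ⟨j, hj, rfl⟩; simpa using hj
  rw [this, Set.ncard_image_of_injective _ (add_left_injective _)]

end Act

section Orbit

variable {F : Type*} [Field F] [Fintype F] {n : ℕ} [NeZero n]

lemma lcm_le_card_orbit {c : ZMod n → F} (hc : c ≠ 0) :
    Nat.lcm (per c) (Fintype.card F - 1) ≤ Nat.card (orbit (Gp n F) c) := by
  classical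
  set M := Multiplicative (ZMod n)
  set St := stabilizer (Gp n F) c with hSt
  set K := St.map (MonoidHom.fst M Fˣ) with hK
  set P := St.comap (MonoidHom.inl M Fˣ) with hP
  -- c has a nonzero coordinate
  obtain ⟨j0, hj0⟩ : ∃ j, c j ≠ 0 := by
    by_contra h; push_neg at h; exact hc (funext fun i => h i)
  -- Step A : Nat.card St = Nat.card K
  have stab_val : ∀ x : Gp n F, x ∈ St → (x.2 : F) * c j0 = c (j0 + x.1.toAdd) := by
    intro x hx
    have := congrFun (hx : x • c = c) (j0 + x.1.toAdd)
    rw [gp_smul_apply] at this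
    simpa using this
  have cardStK : Nat.card St = Nat.card K := by
    apply Nat.card_eq_of_bijective
      (fun x => (⟨x.1.1, Subgroup.mem_map_of_mem _ x.2⟩ : K))
    constructor
    · rintro ⟨x, hx⟩ ⟨y, hy⟩ hxy
      simp only [Subtype.mk.injEq] at hxy ⊢
      have h1 := stab_val x hx
      have h2 := stab_val y hy
      replace hxy : x.1 = y.1 := congrArg Subtype.val hxy
      rw [hxy] at h1
      rw [← h2] at h1
      have : (x.2 : F) = (y.2 : F) := mul_right_cancel₀ hj0 h1
      exact Prod.ext hxy (Units.ext this)
    · rintro ⟨m, hm⟩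
      obtain ⟨x, hx, hx2⟩ := Subgroup.mem_map.mp hm
      exact ⟨⟨x, hx⟩, Subtype.ext hx2⟩
  -- Step B : cyclic generator of K
  obtain ⟨g₀, hg₀⟩ := IsCyclic.exists_generator (α := K)
  have cardK : Nat.card K = orderOf ((g₀ : M)) := by
    rw [← (orderOf_eq_card_of_forall_mem_zpowers hg₀), Subgroup.orderOf_coe]
  -- Step C : lift to the stabilizer
  obtain ⟨x, hxSt, hx1⟩ := Subgroup.mem_map.mp g₀.2
  set u := x.2 with hu
  set e := orderOf u with he
  have he0 : e ≠ 0 := (orderOf_pos u).ne'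
  have hedvd : e ∣ Fintype.card F - 1 := by
    rw [← Fintype.card_units]
    exact orderOf_dvd_card
  have hgeP : (g₀ : M) ^ e ∈ P := by
    have hxe : x ^ e ∈ St := pow_mem hxSt e
    have : x ^ e = (MonoidHom.inl M Fˣ) ((g₀ : M) ^ e) := by
      apply Prod.ext
      · simp [← hx1]
      · simp [hu ▸ pow_orderOf_eq_one u]; exact pow_orderOf_eq_one u
    rw [this] at hxe
    exact Subgroup.mem_comap.mpr hxe
  -- Step D : arithmetic
  set o := orderOf ((g₀ : M)) with ho
  have ho0 : o ≠ 0 := (orderOf_pos _).ne'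
  set d := Nat.gcd o e with hd
  have hdo : d ∣ o := Nat.gcd_dvd_left o e
  have hde : d ∣ e := Nat.gcd_dvd_right o e
  have horder : orderOf ((g₀ : M) ^ e) = o / d := orderOf_pow' _ he0
  have ho'0 : o / d ≠ 0 := by
    rw [← horder]; exact (orderOf_pos _).ne'
  have h1 : Nat.card K * K.index = n := by
    rw [Subgroup.card_mul_index, card_M]
  have h2 : (o / d) * (Subgroup.zpowers ((g₀ : M) ^ e)).index = n := by
    rw [← horder, ← Nat.card_zpowers, Subgroup.card_mul_index, card_M]
  have h3 : per c ∣ (Subgroup.zpowers ((g₀ : M) ^ e)).index :=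
    Subgroup.index_dvd_of_le (Subgroup.zpowers_le.mpr hgeP)
  have hidx : (Subgroup.zpowers ((g₀ : M) ^ e)).index = d * K.index := by
    have : (o / d) * (Subgroup.zpowers ((g₀ : M) ^ e)).index
        = (o / d) * (d * K.index) := by
      rw [h2, ← mul_assoc, Nat.div_mul_cancel hdo, ← cardK, h1]
    exact Nat.eq_of_mul_eq_mul_left (Nat.pos_of_ne_zero ho'0) this
  have hper : per c ∣ K.index * (Fintype.card F - 1) := by
    have h5 : per c ∣ d * K.index := hidx ▸ h3
    have h4 : d * K.index ∣ (Fintype.card F - 1) * K.index :=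
      mul_dvd_mul (hde.trans hedvd) dvd_rfl
    exact h5.trans (h4.trans (dvd_of_eq (mul_comm _ _)))
  have hlcm : Nat.lcm (per c) (Fintype.card F - 1) ∣ K.index * (Fintype.card F - 1) :=
    Nat.lcm_dvd hper (dvd_mul_left _ _)
  -- Step E : orbit size
  haveI : Fintype (orbit (Gp n F) c) := Fintype.ofFinite _
  have horb : Nat.card (orbit (Gp n F) c) * Nat.card St = n * (Fintype.card F - 1) := by
    rw [Nat.card_eq_fintype_card, Nat.card_eq_fintype_card,
      MulAction.card_orbit_mul_card_stabilizer_eq_card_group]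
    simp [Fintype.card_prod, Fintype.card_units, ZMod.card, M]
  have horb2 : Nat.card (orbit (Gp n F) c) = K.index * (Fintype.card F - 1) := by
    have hK0 : Nat.card K ≠ 0 := Nat.card_pos.ne'
    apply Nat.eq_of_mul_eq_mul_right (Nat.pos_of_ne_zero hK0)
    calc Nat.card (orbit (Gp n F) c) * Nat.card K
        = Nat.card (orbit (Gp n F) c) * Nat.card St := by rw [cardStK]
      _ = n * (Fintype.card F - 1) := horb
      _ = Nat.card K * K.index * (Fintype.card F - 1) := by rw [h1]
      _ = K.index * (Fintype.card F - 1) * Nat.card K := by ring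
  haveI : Nonempty (orbit (Gp n F) c) := ⟨⟨c, mem_orbit_self c⟩⟩
  have hpos : 0 < Nat.card (orbit (Gp n F) c) := Nat.card_pos
  rw [horb2] at hpos ⊢
  exact Nat.le_of_dvd hpos hlcm

end Orbit

section Count

variable {F : Type*} [Field F] [Fintype F] {n : ℕ} [NeZero n]

lemma count_per (C : Submodule F (ZMod n → F)) (hcyc : ∀ c ∈ C, cshift c ∈ C) (t : ℕ) :
    Set.ncard {w : ℕ | ∃ c, c ∈ C ∧ c ≠ 0 ∧ per c = t ∧ hwt c = w}
        * Nat.lcm t (Fintype.card F - 1)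
      ≤ Set.ncard {c : ZMod n → F | c ∈ C ∧ c ≠ 0 ∧ per c = t} := by
  classical
  set L := Nat.lcm t (Fintype.card F - 1) with hL
  set Wt := {w : ℕ | ∃ c, c ∈ C ∧ c ≠ 0 ∧ per c = t ∧ hwt c = w} with hWt
  set St := {c : ZMod n → F | c ∈ C ∧ c ≠ 0 ∧ per c = t} with hSt
  have hStfin : St.Finite := Set.toFinite _
  have hWtfin : Wt.Finite := by
    have : Wt ⊆ hwt '' St := by
      rintro w ⟨c, hc1, hc2, hc3, hc4⟩
      exact ⟨c, ⟨hc1, hc2, hc3⟩, hc4⟩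
    exact (hStfin.image hwt).subset this
  set Wt' := hWtfin.toFinset with hWt'
  set StF := hStfin.toFinset with hStF
  have key : ∀ w : ℕ, ∃ A : Finset (ZMod n → F),
      w ∈ Wt' → (↑A ⊆ St ∧ (∀ x ∈ A, hwt x = w) ∧ L ≤ A.card) := by
    intro w
    by_cases hw : w ∈ Wt'
    · obtain ⟨c, hc1, hc2, hc3, hc4⟩ := (hWtfin.mem_toFinset).mp hw
      have horbfin : (orbit (Gp n F) c).Finite := Set.toFinite _
      refine ⟨horbfin.toFinset, fun _ => ⟨?_, ?_, ?_⟩⟩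
      · intro x hx
        obtain ⟨g, rfl⟩ := horbfin.mem_toFinset.mp (by simpa using hx)
        exact ⟨smul_mem_code hcyc hc1 g, smul_ne_zero_code hc2 g, by rw [per_smul, hc3]⟩
      · intro x hx
        obtain ⟨g, rfl⟩ := horbfin.mem_toFinset.mp hx
        rw [hwt_smul, hc4]
      · have := lcm_le_card_orbit hc2
        rw [hc3] at this
        rwa [Nat.card_coe_set_eq, Set.ncard_eq_toFinset_card _ horbfin] at this
    · exact ⟨∅, fun h => absurd h hw⟩
  choose B hB using key
  have hdisj : ∀ w ∈ Wt', ∀ w' ∈ Wt', w ≠ w' → Disjoint (B w) (B w') := by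
    intro w hw w' hw' hne
    rw [Finset.disjoint_left]
    intro x hx hx'
    exact hne (((hB w hw).2.1 x hx).symm.trans ((hB w' hw').2.1 x hx'))
  have hsub : Wt'.biUnion B ⊆ StF := by
    intro x hx
    obtain ⟨w, hw, hxw⟩ := Finset.mem_biUnion.mp hx
    exact hStfin.mem_toFinset.mpr ((hB w hw).1 hxw)
  calc Wt.ncard * L = Wt'.card * L := by rw [Set.ncard_eq_toFinset_card _ hWtfin]
    _ = ∑ _w ∈ Wt', L := by rw [Finset.sum_const, smul_eq_mul]
    _ ≤ ∑ w ∈ Wt', (B w).card := Finset.sum_le_sum fun w hw => (hB w hw).2.2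
    _ = (Wt'.biUnion B).card := (Finset.card_biUnion hdisj).symm
    _ ≤ StF.card := Finset.card_le_card hsub
    _ = St.ncard := (Set.ncard_eq_toFinset_card _ hStfin).symm

end Count

/-- If `C` is an `[n,k]_q` cyclic code with exactly `s` nonzero weights, then
`s ≤ 1 + (q^k - 1) · (Σ_{t|n, t>1} 1 / lcm(t, q-1)^2)^{1/2}` as real numbers. -/
theorem stmt3 {F : Type*} [Field F] [Fintype F] {n k : ℕ} [NeZero n]
    (q : ℕ) (hq : q = Fintype.card F)
    (C : Submodule F (ZMod n → F)) (hcyc : ∀ c ∈ C, cshift c ∈ C)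
    (hk : Module.finrank F C = k)
    (s : ℕ) (hs : s = Set.ncard {w : ℕ | ∃ c ∈ C, c ≠ 0 ∧ hwt c = w}) :
    (s : ℝ) ≤ 1 + ((q : ℝ) ^ k - 1) *
      Real.sqrt (∑ t ∈ n.divisors.filter (fun t => 1 < t),
        1 / ((Nat.lcm t (q - 1) : ℝ)) ^ 2) := by
  classical
  subst hs hq hk
  set q := Fintype.card F with hq
  set D := n.divisors.filter (fun t => 1 < t) with hD
  set Wt : ℕ → Set ℕ :=
    fun t => {w | ∃ c, c ∈ C ∧ c ≠ 0 ∧ per c = t ∧ hwt c = w} with hWt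
  set St : ℕ → Set (ZMod n → F) := fun t => {c | c ∈ C ∧ c ≠ 0 ∧ per c = t} with hSt
  set W := {w : ℕ | ∃ c ∈ C, c ≠ 0 ∧ hwt c = w} with hW
  have hWfin : W.Finite := (Set.finite_range hwt).subset
    (by rintro w ⟨c, _, _, h⟩; exact ⟨c, h⟩)
  have hWtfin : ∀ t, (Wt t).Finite := fun t => (Set.finite_range hwt).subset
    (by rintro w ⟨c, _, _, _, h⟩; exact ⟨c, h⟩)
  have hStfin : ∀ t, (St t).Finite := fun t => Set.toFinite _
  -- Step 1 : W.ncard ≤ 1 + ∑ t ∈ D, (Wt t).ncard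
  have step1 : W.ncard ≤ 1 + ∑ t ∈ D, (Wt t).ncard := by
    have hsub : hWfin.toFinset ⊆
        insert n (D.biUnion fun t => (hWtfin t).toFinset) := by
      intro w hw
      obtain ⟨c, hc1, hc2, hc4⟩ := hWfin.mem_toFinset.mp hw
      by_cases h1 : per c = 1
      · have hconst := per_eq_one_const h1
        have hc0 : c 0 ≠ 0 := by
          obtain ⟨j, hj⟩ : ∃ j, c j ≠ 0 := by
            by_contra h; push_neg at h; exact hc2 (funext fun i => h i)
          rwa [hconst j] at hj
        have : hwt c = n := by
          unfold hwt
          have : {i | c i ≠ 0} = Set.univ := by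
            ext i; simp only [Set.mem_setOf_eq, Set.mem_univ, iff_true]
            rw [hconst i]; exact hc0
          rw [this, Set.ncard_univ, Nat.card_eq_fintype_card, ZMod.card]
        rw [← hc4, this]
        exact Finset.mem_insert_self _ _
      · refine Finset.mem_insert_of_mem (Finset.mem_biUnion.mpr ⟨per c, ?_, ?_⟩)
        · rw [hD, Finset.mem_filter, Nat.mem_divisors]
          exact ⟨⟨per_dvd c, NeZero.ne n⟩,
            lt_of_le_of_ne (per_pos c) (fun h => h1 h.symm)⟩
        · exact (hWtfin _).mem_toFinset.mpr ⟨c, hc1, hc2, rfl, hc4⟩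
    calc W.ncard = hWfin.toFinset.card := Set.ncard_eq_toFinset_card _ _
      _ ≤ (insert n (D.biUnion fun t => (hWtfin t).toFinset)).card :=
          Finset.card_le_card hsub
      _ ≤ (D.biUnion fun t => (hWtfin t).toFinset).card + 1 :=
          Finset.card_insert_le _ _
      _ ≤ (∑ t ∈ D, ((hWtfin t).toFinset).card) + 1 :=
          Nat.add_le_add_right (Finset.card_biUnion_le) 1
      _ = 1 + ∑ t ∈ D, (Wt t).ncard := by
          rw [Nat.add_comm]
          congr 1
          exact Finset.sum_congr rfl fun t _ =>
            (Set.ncard_eq_toFinset_card _ _).symm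
  -- Step 2 : ∑ t ∈ D, (St t).ncard ≤ q ^ k - 1
  have card_code : Nat.card C = q ^ Module.finrank F C := by
    rw [Nat.card_eq_fintype_card]; exact Module.card_eq_pow_finrank
  have step2 : ∑ t ∈ D, (St t).ncard ≤ q ^ Module.finrank F C - 1 := by
    have hdisj : ∀ t ∈ D, ∀ t' ∈ D, t ≠ t' →
        Disjoint ((hStfin t).toFinset) ((hStfin t').toFinset) := by
      intro t _ t' _ hne
      rw [Finset.disjoint_left]
      intro c hc hc'
      exact hne (((hStfin t).mem_toFinset.mp hc).2.2.symm.trans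
        ((hStfin t').mem_toFinset.mp hc').2.2)
    set S : Set (ZMod n → F) := (C : Set (ZMod n → F)) \ {0} with hS
    have hSfin : S.Finite := Set.toFinite _
    have hsub : (D.biUnion fun t => (hStfin t).toFinset) ⊆ hSfin.toFinset := by
      intro c hc
      obtain ⟨t, _, hct⟩ := Finset.mem_biUnion.mp hc
      obtain ⟨h1, h2, _⟩ := (hStfin t).mem_toFinset.mp hct
      exact hSfin.mem_toFinset.mpr ⟨h1, h2⟩
    have hScard : S.ncard = q ^ Module.finrank F C - 1 := by
      have h0 : ((C : Set (ZMod n → F))).ncard = q ^ Module.finrank F C := by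
        rw [← Nat.card_coe_set_eq]
        exact card_code
      rw [hS, Set.ncard_diff_singleton_of_mem
        (by simp : (0 : ZMod n → F) ∈ (C : Set _)), h0]
    calc ∑ t ∈ D, (St t).ncard = ∑ t ∈ D, ((hStfin t).toFinset).card :=
          Finset.sum_congr rfl fun t _ => Set.ncard_eq_toFinset_card _ _
      _ = (D.biUnion fun t => (hStfin t).toFinset).card :=
          (Finset.card_biUnion hdisj).symm
      _ ≤ hSfin.toFinset.card := Finset.card_le_card hsub
      _ = S.ncard := (Set.ncard_eq_toFinset_card _ _).symm
      _ = q ^ Module.finrank F C - 1 := hScard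
  -- Step 3 : per-t bound, real arithmetic
  set kk := Module.finrank F C with hkk
  have hq2 : 2 ≤ q := Fintype.one_lt_card
  have hqk1 : 1 ≤ q ^ kk := Nat.one_le_pow _ _ (by omega)
  have hL : ∀ t ∈ D, (0 : ℝ) < (Nat.lcm t (q - 1) : ℝ) := by
    intro t ht
    have ht' : 0 < t := by
      rw [hD, Finset.mem_filter] at ht; omega
    have : 0 < Nat.lcm t (q - 1) := Nat.pos_of_ne_zero (Nat.lcm_ne_zero (by omega) (by omega))
    exact_mod_cast this
  have key : ∀ t ∈ D, ((Wt t).ncard : ℝ) ≤ ((St t).ncard : ℝ) * (1 / (Nat.lcm t (q - 1) : ℝ)) := by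
    intro t ht
    have h := count_per C hcyc t
    have hLt := hL t ht
    rw [mul_one_div, le_div_iff₀ hLt]
    calc ((Wt t).ncard : ℝ) * (Nat.lcm t (q-1) : ℝ)
        = (((Wt t).ncard * Nat.lcm t (q-1) : ℕ) : ℝ) := by push_cast; ring
      _ ≤ ((St t).ncard : ℝ) := by exact_mod_cast h
  -- Cauchy–Schwarz
  have hb_nonneg : ∀ t ∈ D, (0 : ℝ) ≤ ((St t).ncard : ℝ) := fun t _ => Nat.cast_nonneg _
  have cs : ∑ t ∈ D, ((St t).ncard : ℝ) * (1 / (Nat.lcm t (q - 1) : ℝ)) ≤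
      (∑ t ∈ D, ((St t).ncard : ℝ)) *
        Real.sqrt (∑ t ∈ D, (1 / (Nat.lcm t (q - 1) : ℝ)) ^ 2) := by
    have h1 : (∑ t ∈ D, ((St t).ncard : ℝ) * (1 / (Nat.lcm t (q - 1) : ℝ))) ^ 2 ≤
        (∑ t ∈ D, ((St t).ncard : ℝ) ^ 2) * ∑ t ∈ D, (1 / (Nat.lcm t (q - 1) : ℝ)) ^ 2 :=
      Finset.sum_mul_sq_le_sq_mul_sq D _ _
    have h2 : ∑ t ∈ D, ((St t).ncard : ℝ) ^ 2 ≤ (∑ t ∈ D, ((St t).ncard : ℝ)) ^ 2 :=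
      Finset.sum_sq_le_sq_sum_of_nonneg hb_nonneg
    have hsum_nonneg : (0:ℝ) ≤ ∑ t ∈ D, ((St t).ncard : ℝ) * (1 / (Nat.lcm t (q - 1) : ℝ)) :=
      Finset.sum_nonneg fun t ht => mul_nonneg (Nat.cast_nonneg _) (by positivity)
    calc ∑ t ∈ D, ((St t).ncard : ℝ) * (1 / (Nat.lcm t (q - 1) : ℝ))
        = Real.sqrt ((∑ t ∈ D, ((St t).ncard : ℝ) * (1 / (Nat.lcm t (q - 1) : ℝ))) ^ 2) :=
          (Real.sqrt_sq hsum_nonneg).symm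
      _ ≤ Real.sqrt ((∑ t ∈ D, ((St t).ncard : ℝ)) ^ 2 *
            ∑ t ∈ D, (1 / (Nat.lcm t (q - 1) : ℝ)) ^ 2) := by
          apply Real.sqrt_le_sqrt
          exact h1.trans (mul_le_mul_of_nonneg_right h2
            (Finset.sum_nonneg fun t ht => by positivity))
      _ = (∑ t ∈ D, ((St t).ncard : ℝ)) *
            Real.sqrt (∑ t ∈ D, (1 / (Nat.lcm t (q - 1) : ℝ)) ^ 2) := by
          rw [Real.sqrt_mul (sq_nonneg _), Real.sqrt_sq
            (Finset.sum_nonneg hb_nonneg)]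
  have hsumS : (∑ t ∈ D, ((St t).ncard : ℝ)) ≤ (q : ℝ) ^ kk - 1 := by
    have := step2
    have h1 : ((∑ t ∈ D, (St t).ncard : ℕ) : ℝ) ≤ ((q ^ kk - 1 : ℕ) : ℝ) := by
      exact_mod_cast this
    rw [Nat.cast_sub hqk1] at h1
    push_cast at h1 ⊢
    linarith
  -- put everything together
  have final : (W.ncard : ℝ) ≤ 1 + ((q : ℝ) ^ kk - 1) *
      Real.sqrt (∑ t ∈ D, (1 / (Nat.lcm t (q - 1) : ℝ)) ^ 2) := by
    have h1 : (W.ncard : ℝ) ≤ 1 + ∑ t ∈ D, ((Wt t).ncard : ℝ) := by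
      have := step1; exact_mod_cast this
    have h2 : ∑ t ∈ D, ((Wt t).ncard : ℝ) ≤
        ∑ t ∈ D, ((St t).ncard : ℝ) * (1 / (Nat.lcm t (q - 1) : ℝ)) :=
      Finset.sum_le_sum key
    have h3 := cs
    have h4 : (∑ t ∈ D, ((St t).ncard : ℝ)) *
          Real.sqrt (∑ t ∈ D, (1 / (Nat.lcm t (q - 1) : ℝ)) ^ 2) ≤
        ((q : ℝ) ^ kk - 1) *
          Real.sqrt (∑ t ∈ D, (1 / (Nat.lcm t (q - 1) : ℝ)) ^ 2) :=
      mul_le_mul_of_nonneg_right hsumS (Real.sqrt_nonneg _)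
    linarith
  have hconv : ∑ t ∈ D, (1 / (Nat.lcm t (q - 1) : ℝ)) ^ 2
      = ∑ t ∈ D, 1 / ((Nat.lcm t (q - 1) : ℝ)) ^ 2 := by
    refine Finset.sum_congr rfl fun t _ => ?_
    rw [div_pow, one_pow]
  rw [hconv] at final
  exact final
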